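/- Let $p$ be a prime and $q$ a prime with $q \ne p$, $\ell \ge 1$, $0 \le k \le \ell-1$. The preimage under $\mathrm{res}^\ell_{\ell-1} : R_\ell \to R_{\ell-1}$ of the ideal $J_{\ell-1,k}(q)$ equals $J_{\ell,k}(q)$. The same holds with $q$ replaced by $0$: $(\mathrm{res}^\ell_{\ell-1})^{-1}(J_{\ell-1,k}(0)) = J_{\ell,k}(0)$. -/

import Mathlib

/-! We model the Burnside ring of the cyclic group `C_{p^ℓ}` via its (injective) mark
homomorphism: `Xe p ℓ i` is the vector of marks of the transitive `C_{p^ℓ}`-set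
`C_{p^ℓ}/C_{p^i}`, namely `j ↦ #(fixed points of C_{p^j})`, stabilized for `j ≥ ℓ`.
The Burnside ring `BR p ℓ` is the subring of `ℕ → ℤ` generated by these mark vectors. -/

/-- Marks of the basis element `X_{ℓ,i} = [C_{p^ℓ}/C_{p^i}]`. -/
def Xe (p l i : ℕ) : ℕ → ℤ := fun j => if min j l ≤ i then (p : ℤ) ^ (l - i) else 0

/-- The Burnside ring of `C_{p^ℓ}`, realized as a subring of the ghost ring `ℕ → ℤ`. -/
def BR (p l : ℕ) : Subring (ℕ → ℤ) := Subring.closure (Set.range (Xe p l))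

/-- The basis element `X_{ℓ,i}` as an element of the Burnside ring. -/
def Xb (p l i : ℕ) : BR p l := ⟨Xe p l i, Subring.subset_closure ⟨i, rfl⟩⟩

/-- `F_{ℓ,i} = X_{ℓ,i} - p^{ℓ-i}` in the Burnside ring. -/
def Fb (p l i : ℕ) : BR p l := Xb p l i - (p : BR p l) ^ (l - i)

/-- `F_{ℓ,i} = X_{ℓ,i} - p^{ℓ-i}` as a mark vector. -/
def Fe (p l i : ℕ) : ℕ → ℤ := Xe p l i - (p : ℕ → ℤ) ^ (l - i)

/-- Restriction `res^ℓ_k` to the subgroup `C_{p^k}` on mark vectors: truncation of marks. -/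
def resA (k : ℕ) : (ℕ → ℤ) →+* (ℕ → ℤ) :=
  Pi.ringHom fun j => Pi.evalRingHom (fun _ => ℤ) (min j k)

/-- Additive transfer (induction) `ind^{m+1}_m` on mark vectors. -/
def indA (p m : ℕ) (a : ℕ → ℤ) : ℕ → ℤ := fun j => if j ≤ m then p * a j else 0

/-- Multiplicative transfer (norm) `jnd^{m+1}_m` on mark vectors. -/
def jndA (p m : ℕ) (a : ℕ → ℤ) : ℕ → ℤ := fun j => if j ≤ m then (a j) ^ p else a m

/-- The ideal `J_{ℓ,k}(x) = (x, F_{ℓ,k}, …, F_{ℓ,ℓ-1})` of the Burnside ring. -/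
def Jb (p l k : ℕ) (x : ℤ) : Ideal (BR p l) :=
  Ideal.span (insert (x : BR p l) (Fb p l '' Set.Ico k l))

/-- Pointwise characterization of membership in `BR p l`. -/
def Tprop (p l : ℕ) (f : ℕ → ℤ) : Prop :=
  (∀ j, f j = f (min j l)) ∧ ∀ j < l, ((p:ℤ)^(l-j)) ∣ (f (j+1) - f j)

def Tsub (p l : ℕ) : Subring (ℕ → ℤ) where
  carrier := {f | Tprop p l f}
  one_mem' := ⟨fun j => rfl, fun j hj => by simp⟩
  zero_mem' := ⟨fun j => rfl, fun j hj => by simp⟩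
  add_mem' := by
    rintro f g ⟨hf1, hf2⟩ ⟨hg1, hg2⟩
    refine ⟨fun j => by simp [Pi.add_apply, ← hf1 j, ← hg1 j], fun j hj => ?_⟩
    have : (f + g) (j+1) - (f + g) j = (f (j+1) - f j) + (g (j+1) - g j) := by
      simp [Pi.add_apply]; ring
    rw [this]; exact dvd_add (hf2 j hj) (hg2 j hj)
  neg_mem' := by
    rintro f ⟨hf1, hf2⟩
    refine ⟨fun j => by simp [← hf1 j], fun j hj => ?_⟩
    have : (-f) (j+1) - (-f) j = -(f (j+1) - f j) := by simp; ring
    rw [this]; exact (hf2 j hj).neg_right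
  mul_mem' := by
    rintro f g ⟨hf1, hf2⟩ ⟨hg1, hg2⟩
    refine ⟨fun j => by simp [Pi.mul_apply, ← hf1 j, ← hg1 j], fun j hj => ?_⟩
    have : (f * g) (j+1) - (f * g) j
        = f (j+1) * (g (j+1) - g j) + g j * (f (j+1) - f j) := by
      simp [Pi.mul_apply]; ring
    rw [this]
    exact dvd_add ((hg2 j hj).mul_left _) ((hf2 j hj).mul_left _)

lemma Xe_mem_Tsub (p l i : ℕ) : Xe p l i ∈ Tsub p l := by
  constructor
  · intro j
    have : min (min j l) l = min j l := by omega
    simp only [Xe, this]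
  · intro j hj
    have h1 : min (j+1) l = j + 1 := by omega
    have h2 : min j l = j := by omega
    simp only [Xe, h1, h2]
    rcases lt_trichotomy j i with h | h | h
    · rw [if_pos (by omega), if_pos (by omega)]; simp
    · subst h
      rw [if_neg (by omega), if_pos le_rfl]
      simpa using (dvd_refl ((p:ℤ)^(l-j))).neg_right
    · rw [if_neg (by omega), if_neg (by omega)]; simp

lemma BR_le_Tsub (p l : ℕ) : BR p l ≤ Tsub p l := by
  rw [BR, Subring.closure_le]
  rintro _ ⟨i, rfl⟩
  exact Xe_mem_Tsub p l i

/-- canonical combination `n + ∑ m i * F_{l,i}` as a mark vector -/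
def cmb (p l : ℕ) (n : ℤ) (m : ℕ → ℤ) : ℕ → ℤ :=
  fun j => n + ∑ i ∈ Finset.range l, m i * Fe p l i j

lemma Fe_mem (p l i : ℕ) : Fe p l i ∈ BR p l :=
  sub_mem (Subring.subset_closure ⟨i, rfl⟩) (pow_mem (natCast_mem _ p) _)

lemma cmb_mem (p l : ℕ) (n : ℤ) (m : ℕ → ℤ) : cmb p l n m ∈ BR p l := by
  have : cmb p l n m = (fun _ => n) + ∑ i ∈ Finset.range l, m i • Fe p l i := by
    funext j; simp [cmb, Finset.sum_apply]
  rw [this]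
  refine add_mem ?_ (Subring.sum_mem _ fun i _ => zsmul_mem (Fe_mem p l i) _)
  have : (fun _ : ℕ => n) = ((n : ℕ → ℤ)) := by funext j; simp
  rw [this]; exact intCast_mem _ n

lemma Fe_apply (p l i j : ℕ) :
    Fe p l i j = if i < min j l then -((p:ℤ)^(l-i)) else 0 := by
  by_cases h : min j l ≤ i
  · simp [Fe, Xe, h, Nat.not_lt.mpr h]
  · simp [Fe, Xe, h, Nat.lt_of_not_le h]

lemma cmb_apply (p l : ℕ) (n : ℤ) (m : ℕ → ℤ) (j : ℕ) :
    cmb p l n m j = n - ∑ i ∈ Finset.range (min j l), m i * (p:ℤ)^(l-i) := by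
  unfold cmb
  have h1 : ∀ i ∈ Finset.range l, m i * Fe p l i j
      = if i < min j l then -(m i * (p:ℤ)^(l-i)) else 0 := by
    intro i _
    rw [Fe_apply]
    split_ifs <;> ring
  rw [Finset.sum_congr rfl h1]
  have h2 : ∑ i ∈ Finset.range (min j l), (if i < min j l then -(m i * (p:ℤ)^(l-i)) else 0)
      = ∑ i ∈ Finset.range l, (if i < min j l then -(m i * (p:ℤ)^(l-i)) else 0) := by
    apply Finset.sum_subset (Finset.range_subset_range.mpr (min_le_right j l))
    intro x _ hx
    rw [if_neg (by simpa [Finset.mem_range] using hx)]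
  rw [← h2, Finset.sum_congr rfl (fun i hi => if_pos (Finset.mem_range.mp hi))]
  rw [Finset.sum_neg_distrib]
  ring

lemma recon {p l : ℕ} {f : ℕ → ℤ} (hf : Tprop p l f) (m : ℕ → ℤ)
    (hm : ∀ i < l, (p:ℤ)^(l-i) * m i = f i - f (i+1)) : f = cmb p l (f 0) m := by
  have key : ∀ t, t ≤ l → f t = cmb p l (f 0) m t := by
    intro t
    induction t with
    | zero => intro _; rw [cmb_apply]; simp
    | succ t ih =>
      intro ht
      have htl : t < l := ht
      rw [cmb_apply]
      have h1 : min (t+1) l = t + 1 := by omega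
      rw [h1, Finset.sum_range_succ]
      have h2 := ih (le_of_lt htl)
      rw [cmb_apply] at h2
      have h3 : min t l = t := by omega
      rw [h3] at h2
      have := hm t htl
      have : f (t+1) = f t - (p:ℤ)^(l-t) * m t := by omega
      rw [this, h2]; ring
  funext j
  rw [hf.1 j, key (min j l) (min_le_right j l), cmb_apply, cmb_apply]
  have : min (min j l) l = min j l := by omega
  rw [this]

lemma mem_BR_iff {p l : ℕ} (f : ℕ → ℤ) : f ∈ BR p l ↔ Tprop p l f := by
  constructor
  · exact fun h => BR_le_Tsub p l h
  · intro h
    have hm : ∀ i < l, (p:ℤ)^(l-i) * ((f i - f (i+1)) / (p:ℤ)^(l-i)) = f i - f (i+1) := by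
      intro i hi
      exact Int.mul_ediv_cancel' ((dvd_sub_comm).mp (h.2 i hi))
    rw [recon h _ hm]
    exact cmb_mem p l _ _

lemma coe_Fb (p l i : ℕ) : ((Fb p l i : BR p l) : ℕ → ℤ) = Fe p l i := by
  show ((Xb p l i - (p : BR p l) ^ (l - i) : BR p l) : ℕ → ℤ) = _
  push_cast
  rfl

lemma dvd_all {x : ℤ} {k l p : ℕ} {f : ℕ → ℤ} (h0 : x ∣ f 0)
    (hd : ∀ i < k, x * (p:ℤ)^(l-i) ∣ f (i+1) - f i) : ∀ i ≤ k, x ∣ f i := by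
  intro i
  induction i with
  | zero => exact fun _ => h0
  | succ i ih =>
    intro hik
    have h1 : x ∣ f (i+1) - f i := (dvd_mul_right x _).trans (hd i (by omega))
    have h2 := ih (by omega)
    simpa using dvd_add h1 h2

/-- `Jb` as an explicitly-characterized ideal -/
def Jideal (p l k : ℕ) (hk : k ≤ l) (x : ℤ) : Ideal (BR p l) where
  carrier := {a | x ∣ (a : ℕ → ℤ) 0 ∧
    ∀ i < k, x * (p:ℤ)^(l-i) ∣ ((a : ℕ → ℤ) (i+1) - (a : ℕ → ℤ) i)}
  zero_mem' := by simp
  add_mem' := by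
    rintro a b ⟨ha0, had⟩ ⟨hb0, hbd⟩
    refine ⟨by push_cast; exact dvd_add ha0 hb0, fun i hi => ?_⟩
    have : ((a + b : BR p l) : ℕ → ℤ) (i+1) - ((a + b : BR p l) : ℕ → ℤ) i
        = ((a:ℕ→ℤ) (i+1) - (a:ℕ→ℤ) i) + ((b:ℕ→ℤ) (i+1) - (b:ℕ→ℤ) i) := by
      push_cast [Pi.add_apply]; ring
    rw [this]; exact dvd_add (had i hi) (hbd i hi)
  smul_mem' := by
    rintro c a ⟨ha0, had⟩
    have hc : Tprop p l (c : ℕ → ℤ) := BR_le_Tsub p l c.2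
    refine ⟨by push_cast [smul_eq_mul]; exact ha0.mul_left _, fun i hi => ?_⟩
    have key : ((c • a : BR p l) : ℕ → ℤ) (i+1) - ((c • a : BR p l) : ℕ → ℤ) i
        = (c:ℕ→ℤ) (i+1) * ((a:ℕ→ℤ) (i+1) - (a:ℕ→ℤ) i)
          + (a:ℕ→ℤ) i * ((c:ℕ→ℤ) (i+1) - (c:ℕ→ℤ) i) := by
      push_cast [smul_eq_mul, Pi.mul_apply]; ring
    rw [key]
    refine dvd_add ((had i hi).mul_left _) ?_
    exact mul_dvd_mul (dvd_all ha0 had i (le_of_lt hi)) (hc.2 i (lt_of_lt_of_le hi hk))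

lemma coe_intCast_BR (p l : ℕ) (x : ℤ) (j : ℕ) : ((x : BR p l) : ℕ → ℤ) j = x := by
  push_cast
  rfl

lemma mem_Jb_iff {p l k : ℕ} {x : ℤ} (hp : p.Prime) (hk : k ≤ l) (a : BR p l) :
    a ∈ Jb p l k x ↔ (x ∣ (a:ℕ→ℤ) 0 ∧
      ∀ i < k, x * (p:ℤ)^(l-i) ∣ ((a:ℕ→ℤ) (i+1) - (a:ℕ→ℤ) i)) := by
  constructor
  · intro h
    have hle : Jb p l k x ≤ Jideal p l k hk x := by
      rw [Jb, Ideal.span_le]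
      rintro s hs
      rcases hs with rfl | ⟨i, ⟨hik, hil⟩, rfl⟩
      · refine ⟨by rw [coe_intCast_BR], fun i' hi' => ?_⟩
        rw [coe_intCast_BR, coe_intCast_BR, sub_self]
        exact dvd_zero _
      · refine ⟨?_, fun i' hi' => ?_⟩
        · rw [coe_Fb, Fe_apply, if_neg (by omega)]
          exact dvd_zero _
        · rw [coe_Fb, Fe_apply, Fe_apply, if_neg (by omega), if_neg (by omega), sub_self]
          exact dvd_zero _
    exact hle h
  · rintro ⟨h0, hd⟩
    have hTa : Tprop p l (a:ℕ→ℤ) := BR_le_Tsub p l a.2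
    set n := (a:ℕ→ℤ) 0 with hn
    set m : ℕ → ℤ := fun i => ((a:ℕ→ℤ) i - (a:ℕ→ℤ) (i+1)) / (p:ℤ)^(l-i) with hmdef
    have hm : ∀ i < l, (p:ℤ)^(l-i) * m i = (a:ℕ→ℤ) i - (a:ℕ→ℤ) (i+1) :=
      fun i hi => Int.mul_ediv_cancel' ((dvd_sub_comm).mp (hTa.2 i hi))
    have hxm : ∀ i < k, x ∣ m i := by
      intro i hi
      obtain ⟨c, hc⟩ := hd i hi
      have hpne : ((p:ℤ))^(l-i) ≠ 0 := pow_ne_zero _ (by exact_mod_cast hp.ne_zero)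
      have heq : (p:ℤ)^(l-i) * m i = (p:ℤ)^(l-i) * (x * (-c)) := by
        rw [hm i (lt_of_lt_of_le hi hk),
          show (a:ℕ→ℤ) i - (a:ℕ→ℤ) (i+1) = -((a:ℕ→ℤ) (i+1) - (a:ℕ→ℤ) i) by ring, hc]
        ring
      exact ⟨-c, mul_left_cancel₀ hpne heq⟩
    set m'' : ℕ → ℤ := fun i => if i < k then m i / x else 0 with hm''
    set c : BR p l := ⟨cmb p l (n / x) m'', cmb_mem p l _ _⟩ with hcdef
    set t : BR p l := (x : BR p l) * c + ∑ i ∈ Finset.Ico k l, (m i : BR p l) * Fb p l i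
      with ht
    have htJ : t ∈ Jb p l k x := by
      refine Ideal.add_mem _ ?_ ?_
      · exact Ideal.mul_mem_right _ _ (Ideal.subset_span (Set.mem_insert _ _))
      · refine Ideal.sum_mem _ fun i hi => Ideal.mul_mem_left _ _ (Ideal.subset_span ?_)
        exact Set.mem_insert_of_mem _ ⟨i, by simpa using (Finset.mem_Ico.mp hi), rfl⟩
    have hat : a = t := by
      apply Subtype.ext
      have hrec : (a : ℕ → ℤ) = cmb p l n m := recon hTa m hm
      rw [hrec]
      funext j
      have hcoe : ((t : BR p l) : ℕ → ℤ) j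
          = x * cmb p l (n/x) m'' j + ∑ i ∈ Finset.Ico k l, m i * Fe p l i j := by
        rw [ht]
        push_cast [coe_Fb]
        simp [Finset.sum_apply]
        exact Or.inl rfl
      rw [hcoe]
      have e1 : x * cmb p l (n/x) m'' j
          = n + ∑ i ∈ Finset.range l, (if i < k then m i * Fe p l i j else 0) := by
        unfold cmb
        rw [mul_add, Finset.mul_sum, Int.mul_ediv_cancel' h0]
        congr 1
        refine Finset.sum_congr rfl fun i _ => ?_
        show x * (m'' i * Fe p l i j) = (if i < k then m i * Fe p l i j else 0)
        by_cases hik : i < k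
        · have h5 : m'' i = m i / x := by simp [hm'', hik]
          rw [h5, if_pos hik, ← mul_assoc, Int.mul_ediv_cancel' (hxm i hik)]
        · have h5 : m'' i = 0 := by simp [hm'', hik]
          rw [h5, if_neg hik, zero_mul, mul_zero]
      have e2 : ∑ i ∈ Finset.range l, (if i < k then m i * Fe p l i j else 0)
          = ∑ i ∈ Finset.range k, m i * Fe p l i j := by
        rw [← Finset.sum_subset (Finset.range_subset_range.mpr hk)
          (fun i _ hi => if_neg (by simpa [Finset.mem_range] using hi))]
        exact Finset.sum_congr rfl fun i hi => if_pos (Finset.mem_range.mp hi)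
      have e3 : ∑ i ∈ Finset.range k, m i * Fe p l i j + ∑ i ∈ Finset.Ico k l, m i * Fe p l i j
          = ∑ i ∈ Finset.range l, m i * Fe p l i j := by
        rw [Finset.range_eq_Ico, Finset.range_eq_Ico]
        exact Finset.sum_Ico_consecutive _ (Nat.zero_le k) hk
      rw [e1, e2, add_assoc, e3]
      rfl
    rw [hat]
    exact htJ

lemma resA_coe (k : ℕ) (f : ℕ → ℤ) (j : ℕ) : resA k f j = f (min j k) := rfl

lemma main_lemma (p l k : ℕ) (x : ℤ) (hp : p.Prime) (hx : IsCoprime x (p:ℤ) ∨ x = 0)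
    (hl : 1 ≤ l) (hk : k ≤ l - 1) (a : BR p l) :
    (∃ b : BR p (l-1), (b : ℕ → ℤ) = resA (l-1) (a : ℕ → ℤ) ∧ b ∈ Jb p (l-1) k x)
      ↔ a ∈ Jb p l k x := by
  have hTa : Tprop p l (a:ℕ→ℤ) := BR_le_Tsub p l a.2
  constructor
  · rintro ⟨b, hb, hbJ⟩
    rw [mem_Jb_iff hp (by omega : k ≤ l)]
    rw [mem_Jb_iff hp hk b] at hbJ
    obtain ⟨h0, hd⟩ := hbJ
    rw [hb] at h0 hd
    refine ⟨by simpa [resA_coe] using h0, fun i hi => ?_⟩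
    have e1 : resA (l-1) (a:ℕ→ℤ) (i+1) = (a:ℕ→ℤ) (i+1) := by
      rw [resA_coe, (by omega : min (i+1) (l-1) = i+1)]
    have e2 : resA (l-1) (a:ℕ→ℤ) i = (a:ℕ→ℤ) i := by
      rw [resA_coe, (by omega : min i (l-1) = i)]
    have hdi := hd i hi
    rw [e1, e2] at hdi
    have hpi : (p:ℤ)^(l-i) ∣ (a:ℕ→ℤ) (i+1) - (a:ℕ→ℤ) i := hTa.2 i (by omega)
    rcases hx with hco | rfl
    · have hxd : x ∣ (a:ℕ→ℤ) (i+1) - (a:ℕ→ℤ) i := (dvd_mul_right x _).trans hdi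
      exact (hco.pow_right).mul_dvd hxd hpi
    · simpa using hdi
  · intro haJ
    rw [mem_Jb_iff hp (by omega : k ≤ l)] at haJ
    obtain ⟨h0, hd⟩ := haJ
    have hg : Tprop p (l-1) (resA (l-1) (a:ℕ→ℤ)) := by
      constructor
      · intro j
        rw [resA_coe, resA_coe, (by omega : min (min j (l-1)) (l-1) = min j (l-1))]
      · intro j hj
        have e1 : resA (l-1) (a:ℕ→ℤ) (j+1) = (a:ℕ→ℤ) (j+1) := by
          rw [resA_coe, (by omega : min (j+1) (l-1) = j+1)]
        have e2 : resA (l-1) (a:ℕ→ℤ) j = (a:ℕ→ℤ) j := by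
          rw [resA_coe, (by omega : min j (l-1) = j)]
        rw [e1, e2]
        exact (pow_dvd_pow (p:ℤ) (by omega : l - 1 - j ≤ l - j)).trans (hTa.2 j (by omega))
    refine ⟨⟨resA (l-1) (a:ℕ→ℤ), (mem_BR_iff _).mpr hg⟩, rfl, ?_⟩
    rw [mem_Jb_iff hp hk]
    constructor
    · simpa [resA_coe] using h0
    · intro i hi
      have e1 : resA (l-1) (a:ℕ→ℤ) (i+1) = (a:ℕ→ℤ) (i+1) := by
        rw [resA_coe, (by omega : min (i+1) (l-1) = i+1)]
      have e2 : resA (l-1) (a:ℕ→ℤ) i = (a:ℕ→ℤ) i := by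
        rw [resA_coe, (by omega : min i (l-1) = i)]
      show x * (p:ℤ)^(l-1-i) ∣ resA (l-1) (a:ℕ→ℤ) (i+1) - resA (l-1) (a:ℕ→ℤ) i
      rw [e1, e2]
      refine dvd_trans ?_ (hd i hi)
      exact mul_dvd_mul_left x (pow_dvd_pow (p:ℤ) (by omega : l - 1 - i ≤ l - i))


/-- For a prime `q ≠ p` and `0 ≤ k ≤ ℓ-1`, the preimage of `J_{ℓ-1,k}(q)` under
`res^ℓ_{ℓ-1} : R_ℓ → R_{ℓ-1}` equals `J_{ℓ,k}(q)`; likewise with `q` replaced by `0`. -/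
theorem res_preimage_Jq (p q l k : ℕ) (hp : p.Prime) (hq : q.Prime) (hpq : q ≠ p)
    (hl : 1 ≤ l) (hk : k ≤ l - 1) :
    (∀ a : BR p l,
      (∃ b : BR p (l-1), (b : ℕ → ℤ) = resA (l-1) (a : ℕ → ℤ) ∧ b ∈ Jb p (l-1) k (q : ℤ))
        ↔ a ∈ Jb p l k (q : ℤ)) ∧
    (∀ a : BR p l,
      (∃ b : BR p (l-1), (b : ℕ → ℤ) = resA (l-1) (a : ℕ → ℤ) ∧ b ∈ Jb p (l-1) k 0)
        ↔ a ∈ Jb p l k 0) := by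
  constructor
  · intro a
    refine main_lemma p l k (q:ℤ) hp (Or.inl ?_) hl hk a
    exact Nat.isCoprime_iff_coprime.mpr ((Nat.coprime_primes hq hp).mpr hpq)
  · intro a
    exact main_lemma p l k 0 hp (Or.inr rfl) hl hk a
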